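/- arXiv:2505.24516 — 2 statements merged into one kernel-verified Lean document; each statement's English description precedes it below -/
import Mathlib

section
/- Let T > 0, p ∈ (1,∞), and let σ ∈ L^p(0,T;ℝ) be such that the (a.e. defined) function t ↦ J^{1/p}σ(t) is essentially unbounded on [0,T], i.e., for every M > 0 the set {t ∈ [0,T] : |J^{1/p}σ(t)| > M} has positive Lebesgue measure. Then there is no continuous function φ : [0,T] → ℝ satisfying J^{1−1/p}(φ − φ(0))(t) = ∫₀ᵗ (φ(s) + σ(s)) ds for all t ∈ [0,T]; that is, the Caputo problem ᶜD^{1/p}_t φ(t) = φ(t) + σ(t) a.e. on [0,T] admits no continuous solution. -/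
open MeasureTheory Real Set

/-- The Riemann–Liouville fractional integral of order `α`:
`J^α g (t) = (1/Γ(α)) ∫₀ᵗ (t-s)^(α-1) g(s) ds`. -/
noncomputable def rlInt {E : Type*} [NormedAddCommGroup E] [NormedSpace ℝ E]
    (α : ℝ) (g : ℝ → E) (t : ℝ) : E :=
  (Real.Gamma α)⁻¹ • ∫ s in (0:ℝ)..t, (t - s) ^ (α - 1) • g s

namespace NoSolAux

/-- interval integrability of the kernel `(t-s)^(a-1)` -/
lemma ker_intervalIntegrable {a : ℝ} (ha : 0 < a) (t r₁ r₂ : ℝ) :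
    IntervalIntegrable (fun s => (t - s) ^ (a - 1)) volume r₁ r₂ := by
  have h : IntervalIntegrable (fun s : ℝ => s ^ (a - 1)) volume (t - r₁) (t - r₂) :=
    intervalIntegral.intervalIntegrable_rpow' (by linarith)
  simpa using h.comp_sub_left t

lemma ker_intervalIntegrable' {a : ℝ} (ha : 0 < a) (r t₁ t₂ : ℝ) :
    IntervalIntegrable (fun s => (s - r) ^ (a - 1)) volume t₁ t₂ := by
  have h : IntervalIntegrable (fun s : ℝ => s ^ (a - 1)) volume (t₁ - r) (t₂ - r) :=
    intervalIntegral.intervalIntegrable_rpow' (by linarith)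
  simpa using h.comp_sub_right r

/-- `∫ s in r..t, (t-s)^(a-1) = (t-r)^a / a` for `r ≤ t`. -/
lemma ker_integral {a : ℝ} (ha : 0 < a) {r t : ℝ} (hrt : r ≤ t) :
    ∫ s in r..t, (t - s) ^ (a - 1) = (t - r) ^ a / a := by
  have h := intervalIntegral.integral_comp_sub_left (a := r) (b := t)
    (fun s : ℝ => s ^ (a - 1)) t
  rw [h, sub_self, integral_rpow (Or.inl (by linarith)), sub_add_cancel,
    Real.zero_rpow (by positivity)]
  simp

lemma ker_integral' {a : ℝ} (ha : 0 < a) {r t : ℝ} (hrt : r ≤ t) :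
    ∫ s in r..t, (s - r) ^ (a - 1) = (t - r) ^ a / a := by
  have h := intervalIntegral.integral_comp_sub_right (a := r) (b := t)
    (fun s : ℝ => s ^ (a - 1)) r
  rw [h, sub_self, integral_rpow (Or.inl (by linarith)), sub_add_cancel,
    Real.zero_rpow (by positivity)]
  simp

end NoSolAux

namespace NoSolAux2
open NoSolAux

/-- normalized Beta-type integral -/
noncomputable def betaI (a b : ℝ) : ℝ := ∫ u in (0:ℝ)..1, (1 - u) ^ (a - 1) * u ^ (b - 1)

lemma betaI_nonneg (a b : ℝ) : 0 ≤ betaI a b := by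
  apply intervalIntegral.integral_nonneg zero_le_one
  intro u hu
  exact mul_nonneg (Real.rpow_nonneg (by linarith [hu.2]) _) (Real.rpow_nonneg hu.1 _)

lemma betaI_left (a : ℝ) (ha : 0 < a) : betaI a 1 = 1 / a := by
  have : betaI a 1 = ∫ u in (0:ℝ)..1, (1 - u) ^ (a - 1) := by
    unfold betaI
    congr 1
    ext u
    simp [Real.rpow_zero]
  rw [this]
  have := ker_integral ha (r := 0) (t := 1) zero_le_one
  simpa using this

lemma betaI_right (b : ℝ) (hb : 0 < b) : betaI 1 b = 1 / b := by
  have : betaI 1 b = ∫ u in (0:ℝ)..1, u ^ (b - 1) := by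
    unfold betaI
    congr 1
    ext u
    simp [Real.rpow_zero]
  rw [this, integral_rpow (Or.inl (by linarith)), sub_add_cancel,
    Real.one_rpow, Real.zero_rpow (by positivity)]
  simp

/-- substitution formula for the Beta-type kernel -/
lemma beta_subst {a b : ℝ} (ha : 0 < a) (hb : 0 < b) {r t : ℝ} (hrt : r < t) :
    ∫ s in r..t, (t - s) ^ (a - 1) * (s - r) ^ (b - 1)
      = (t - r) ^ (a + b - 1) * betaI a b := by
  have htr : (0:ℝ) < t - r := by linarith
  have h := intervalIntegral.integral_comp_mul_add
    (a := (0:ℝ)) (b := 1) (fun s => (t - s) ^ (a - 1) * (s - r) ^ (b - 1)) htr.ne' r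
  simp only [mul_zero, zero_add, mul_one, sub_add_cancel, smul_eq_mul] at h
  -- h : ∫ u in 0..1, f ((t-r)*u + r) = (t-r)⁻¹ * ∫ s in r..t, f s
  have h2 : ∫ u in (0:ℝ)..1, (t - ((t - r) * u + r)) ^ (a - 1) * ((t - r) * u + r - r) ^ (b - 1)
      = (t - r) ^ (a - 1) * (t - r) ^ (b - 1) * betaI a b := by
    rw [show ((t - r) ^ (a - 1) * (t - r) ^ (b - 1) * betaI a b)
        = ∫ u in (0:ℝ)..1, (t - r) ^ (a - 1) * (t - r) ^ (b - 1) * ((1 - u) ^ (a - 1) * u ^ (b - 1))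
        from (intervalIntegral.integral_const_mul _ _).symm]
    apply intervalIntegral.integral_congr
    intro u hu
    rw [Set.uIcc_of_le zero_le_one] at hu
    dsimp only
    have hu0 : 0 ≤ u := hu.1
    have hu1 : 0 ≤ 1 - u := by linarith [hu.2]
    have e1 : t - ((t - r) * u + r) = (t - r) * (1 - u) := by ring
    have e2 : (t - r) * u + r - r = (t - r) * u := by ring
    rw [e1, e2, Real.mul_rpow htr.le hu1, Real.mul_rpow htr.le hu0]
    ring
  rw [h2] at h
  have : ∫ s in r..t, (t - s) ^ (a - 1) * (s - r) ^ (b - 1)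
      = (t - r) * ((t - r) ^ (a - 1) * (t - r) ^ (b - 1) * betaI a b) := by
    field_simp at h
    linarith [h]
  rw [this]
  rw [← Real.rpow_add htr, show a - 1 + (b - 1) = a + b - 2 by ring]
  rw [show (t - r) * ((t - r) ^ (a + b - 2) * betaI a b)
      = ((t - r) ^ (a + b - 2) * (t - r) ^ (1:ℝ)) * betaI a b by rw [Real.rpow_one]; ring]
  rw [← Real.rpow_add htr, show a + b - 2 + 1 = a + b - 1 by ring]

end NoSolAux2

namespace NoSolAux3
open NoSolAux NoSolAux2

lemma betaI_eq_Gamma {α : ℝ} (h0 : 0 < α) (h1 : α < 1) :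
    betaI α (1 - α) = Real.Gamma α * Real.Gamma (1 - α) := by
  have hb : (0:ℝ) < 1 - α := by linarith
  have hC := Complex.Gamma_mul_Gamma_eq_betaIntegral
    (s := ((1 - α : ℝ) : ℂ)) (t := ((α : ℝ) : ℂ)) (by simpa using hb) (by simpa using h0)
  -- `Complex.betaIntegral u v = ∫ x in 0..1, x^(u-1) * (1-x)^(v-1)`
  have hsum : ((1 - α : ℝ) : ℂ) + ((α : ℝ) : ℂ) = 1 := by push_cast; ring
  rw [hsum, Complex.Gamma_one, one_mul] at hC
  have hreal : Complex.betaIntegral ((1 - α : ℝ) : ℂ) ((α : ℝ) : ℂ) = ((betaI α (1 - α) : ℝ) : ℂ) := by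
    rw [Complex.betaIntegral]
    rw [show ((betaI α (1 - α) : ℝ) : ℂ)
        = ∫ x in (0:ℝ)..1, (((1 - x) ^ (α - 1) * x ^ (1 - α - 1) : ℝ) : ℂ) from
      (intervalIntegral.integral_ofReal).symm ▸ by rw [betaI]]
    apply intervalIntegral.integral_congr
    intro x hx
    rw [Set.uIcc_of_le zero_le_one] at hx
    have hx0 : (0:ℝ) ≤ x := hx.1
    have hx1 : (0:ℝ) ≤ 1 - x := by linarith [hx.2]
    dsimp only
    rw [Complex.ofReal_mul, Complex.ofReal_cpow hx0, Complex.ofReal_cpow hx1]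
    push_cast
    ring
  rw [hreal] at hC
  have : ((Real.Gamma (1-α) * Real.Gamma α : ℝ) : ℂ) = ((betaI α (1-α) : ℝ) : ℂ) := by
    rw [← hC, Complex.ofReal_mul, Complex.Gamma_ofReal, Complex.Gamma_ofReal]
  have := Complex.ofReal_inj.mp this
  linarith [this]

/-- integrability of the two-sided Beta kernel on `(r,t)` -/
lemma beta_ker_integrableOn {a b : ℝ} (ha : 0 < a) (ha1 : a ≤ 1) (hb : 0 < b) (hb1 : b ≤ 1)
    {r t : ℝ} (hrt : r ≤ t) :
    IntegrableOn (fun s => (t - s) ^ (a - 1) * (s - r) ^ (b - 1)) (Ioc r t) volume := by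
  rcases eq_or_lt_of_le hrt with h | h
  · subst h; simp
  set m := (r + t) / 2 with hm
  have hrm : r < m := by rw [hm]; linarith
  have hmt : m < t := by rw [hm]; linarith
  have hmeas : Measurable fun s : ℝ => (t - s) ^ (a - 1) * (s - r) ^ (b - 1) := by
    apply Measurable.mul
    · exact (measurable_const.sub measurable_id).pow measurable_const
    · exact (measurable_id.sub measurable_const).pow measurable_const
  have h1 : IntegrableOn (fun s => (t - s) ^ (a - 1) * (s - r) ^ (b - 1)) (Ioc r m) volume := by
    have hdom : IntegrableOn (fun s => (t - m) ^ (a - 1) * (s - r) ^ (b - 1)) (Ioc r m) volume := by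
      apply Integrable.const_mul
      have := (ker_intervalIntegrable' hb r r m)
      rw [intervalIntegrable_iff, Set.uIoc_of_le hrm.le] at this
      exact this
    apply hdom.mono' (hmeas.aestronglyMeasurable.restrict)
    filter_upwards [ae_restrict_mem measurableSet_Ioc] with s hs
    have hsr : 0 < s - r := by linarith [hs.1]
    have hts : 0 < t - s := by linarith [hs.2]
    have htm : 0 < t - m := by linarith
    rw [Real.norm_eq_abs, abs_of_nonneg (by positivity)]
    have hk : (t - s) ^ (a - 1) ≤ (t - m) ^ (a - 1) :=
      Real.rpow_le_rpow_of_nonpos htm (by linarith [hs.2]) (by linarith)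
    exact mul_le_mul_of_nonneg_right hk (Real.rpow_nonneg hsr.le _)
  have h2 : IntegrableOn (fun s => (t - s) ^ (a - 1) * (s - r) ^ (b - 1)) (Ioc m t) volume := by
    have hdom : IntegrableOn (fun s => (t - s) ^ (a - 1) * (m - r) ^ (b - 1)) (Ioc m t) volume := by
      apply Integrable.mul_const
      have := (ker_intervalIntegrable ha t m t)
      rw [intervalIntegrable_iff, Set.uIoc_of_le hmt.le] at this
      exact this
    apply hdom.mono' (hmeas.aestronglyMeasurable.restrict)
    filter_upwards [ae_restrict_mem measurableSet_Ioc] with s hs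
    have hsr : 0 < s - r := by linarith [hs.1]
    have hts : 0 ≤ t - s := by linarith [hs.2]
    have hmr : 0 < m - r := by linarith
    rw [Real.norm_eq_abs, abs_of_nonneg (by positivity)]
    have hk : (s - r) ^ (b - 1) ≤ (m - r) ^ (b - 1) :=
      Real.rpow_le_rpow_of_nonpos hmr (by linarith [hs.1]) (by linarith)
    exact mul_le_mul_of_nonneg_left hk (Real.rpow_nonneg hts _)
  have : Ioc r t = Ioc r m ∪ Ioc m t := (Set.Ioc_union_Ioc_eq_Ioc hrm.le hmt.le).symm
  rw [this]
  exact h1.union h2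

end NoSolAux3

namespace NoSolFub
open NoSolAux NoSolAux2 NoSolAux3

lemma ae_Ioo {t : ℝ} : ∀ᵐ r ∂(volume.restrict (Ioc (0:ℝ) t)), r ∈ Ioo (0:ℝ) t := by
  have h1 : ∀ᵐ r ∂(volume.restrict (Ioc (0:ℝ) t)), r ∈ Ioc (0:ℝ) t :=
    ae_restrict_mem measurableSet_Ioc
  have h2 : ∀ᵐ r : ℝ, r ≠ t := by
    rw [ae_iff]
    simpa [not_not, Set.setOf_eq_eq_singleton] using measure_singleton t
  filter_upwards [h1, ae_restrict_of_ae h2] with r hr hne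
  exact ⟨hr.1, lt_of_le_of_ne hr.2 hne⟩

variable {a b t : ℝ} {g : ℝ → ℝ}

lemma fub_measurable (a b t : ℝ) (hgm : Measurable g) :
    Measurable (fun q : ℝ × ℝ =>
      if q.2 < q.1 then (t - q.1) ^ (a - 1) * ((q.1 - q.2) ^ (b - 1) * g q.2) else 0) := by
  have hset : MeasurableSet {q : ℝ × ℝ | q.2 < q.1} :=
    measurableSet_lt measurable_snd measurable_fst
  refine Measurable.ite hset ?_ measurable_const
  exact ((measurable_const.sub measurable_fst).pow measurable_const).mul
    (((measurable_fst.sub measurable_snd).pow measurable_const).mul (hgm.comp measurable_snd))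

lemma prod_integrable (ha : 0 < a) (ha1 : a ≤ 1) (hb : 0 < b) (hb1 : b ≤ 1)
    (hab : 1 ≤ a + b) (ht : 0 < t) (hgm : Measurable g)
    (hgi : IntegrableOn g (Ioc 0 t) volume) :
    Integrable (fun q : ℝ × ℝ =>
        if q.2 < q.1 then (t - q.1) ^ (a - 1) * ((q.1 - q.2) ^ (b - 1) * g q.2) else 0)
      ((volume.restrict (Ioc 0 t)).prod (volume.restrict (Ioc 0 t))) := by
  set μ := volume.restrict (Ioc (0:ℝ) t) with hμ
  have hfm := fub_measurable (g := g) a b t hgm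
  rw [integrable_prod_iff' hfm.aestronglyMeasurable]
  constructor
  · -- sections in the first variable, for a.e. r
    filter_upwards [ae_Ioo (t := t)] with r hr
    have hker : IntegrableOn (fun s => ((t - s) ^ (a - 1) * (s - r) ^ (b - 1)) * g r)
        (Ioc r t) volume := (beta_ker_integrableOn ha ha1 hb hb1 hr.2.le).mul_const _
    have heq : (fun s => if r < s then (t - s) ^ (a - 1) * ((s - r) ^ (b - 1) * g r) else 0)
        = (Ioi r).indicator (fun s => ((t - s) ^ (a - 1) * (s - r) ^ (b - 1)) * g r) := by
      funext s
      by_cases h : r < s <;> simp [Set.indicator_apply, Set.mem_Ioi, h, mul_assoc]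
    show Integrable (fun s => if r < s then (t - s) ^ (a - 1) * ((s - r) ^ (b - 1) * g r) else 0) μ
    rw [heq, hμ, integrable_indicator_iff measurableSet_Ioi, IntegrableOn,
      Measure.restrict_restrict measurableSet_Ioi]
    have hset : Ioi r ∩ Ioc 0 t = Ioc r t := by
      ext s
      simp only [Set.mem_inter_iff, Set.mem_Ioi, Set.mem_Ioc]
      constructor
      · rintro ⟨h1, _, h3⟩; exact ⟨h1, h3⟩
      · rintro ⟨h1, h2⟩; exact ⟨h1, lt_trans hr.1 h1, h2⟩
    rwa [hset]
  · -- integrability of the integrated norms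
    have haesm : AEStronglyMeasurable
        (fun r => ∫ s, ‖if r < s then (t - s) ^ (a - 1) * ((s - r) ^ (b - 1) * g r) else 0‖ ∂μ) μ := by
      have : Measurable (fun q : ℝ × ℝ =>
          ‖if q.2 < q.1 then (t - q.1) ^ (a - 1) * ((q.1 - q.2) ^ (b - 1) * g q.2) else 0‖) :=
        hfm.norm
      have hswap : Measurable (fun q : ℝ × ℝ =>
          ‖if q.1 < q.2 then (t - q.2) ^ (a - 1) * ((q.2 - q.1) ^ (b - 1) * g q.1) else 0‖) :=
        this.comp measurable_swap
      exact hswap.aestronglyMeasurable.integral_prod_right'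
    refine Integrable.mono' ((hgi.norm.const_mul (betaI a b * t ^ (a + b - 1)))) haesm ?_
    filter_upwards [ae_Ioo (t := t)] with r hr
    have hrt : r < t := hr.2
    have h0r : 0 < r := hr.1
    -- compute the inner integral of norms
    have heq : (fun s => ‖if r < s then (t - s) ^ (a - 1) * ((s - r) ^ (b - 1) * g r) else 0‖)
        = (Ioi r).indicator (fun s => ‖((t - s) ^ (a - 1) * (s - r) ^ (b - 1)) * g r‖) := by
      funext s
      by_cases h : r < s <;> simp [Set.indicator_apply, Set.mem_Ioi, h, mul_assoc]
    have hset : Ioi r ∩ Ioc 0 t = Ioc r t := by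
      ext s
      simp only [Set.mem_inter_iff, Set.mem_Ioi, Set.mem_Ioc]
      constructor
      · rintro ⟨h1, _, h3⟩; exact ⟨h1, h3⟩
      · rintro ⟨h1, h2⟩; exact ⟨h1, lt_trans h0r h1, h2⟩
    have hval : ∫ s, ‖if r < s then (t - s) ^ (a - 1) * ((s - r) ^ (b - 1) * g r) else 0‖ ∂μ
        = ∫ s in Ioc r t, ‖((t - s) ^ (a - 1) * (s - r) ^ (b - 1)) * g r‖ := by
      rw [heq, hμ, integral_indicator measurableSet_Ioi,
        Measure.restrict_restrict measurableSet_Ioi, hset]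
    rw [hval]
    have hnorm : ∀ s ∈ Ioc r t, ‖((t - s) ^ (a - 1) * (s - r) ^ (b - 1)) * g r‖
        = ((t - s) ^ (a - 1) * (s - r) ^ (b - 1)) * |g r| := by
      intro s hs
      have h1 : (0:ℝ) ≤ t - s := by linarith [hs.2]
      have h2 : (0:ℝ) ≤ s - r := by linarith [hs.1]
      rw [Real.norm_eq_abs, abs_mul, abs_of_nonneg (by positivity)]
    rw [setIntegral_congr_fun measurableSet_Ioc hnorm, integral_mul_const,
      ← intervalIntegral.integral_of_le hrt.le, beta_subst ha hb hrt]
    have hbound : (t - r) ^ (a + b - 1) * betaI a b * |g r|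
        ≤ betaI a b * t ^ (a + b - 1) * |g r| := by
      have h1 : (t - r) ^ (a + b - 1) ≤ t ^ (a + b - 1) :=
        Real.rpow_le_rpow (by linarith) (by linarith) (by linarith)
      have h2 : 0 ≤ betaI a b := betaI_nonneg a b
      have h3 := mul_le_mul_of_nonneg_left h1 h2
      calc (t - r) ^ (a + b - 1) * betaI a b * |g r|
          = betaI a b * (t - r) ^ (a + b - 1) * |g r| := by ring
        _ ≤ betaI a b * t ^ (a + b - 1) * |g r| := by
            exact mul_le_mul_of_nonneg_right (by rw [mul_comm] at h3 ⊢; exact h3) (abs_nonneg _)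
    calc ‖(t - r) ^ (a + b - 1) * betaI a b * |g r|‖
        = (t - r) ^ (a + b - 1) * betaI a b * |g r| := by
          rw [Real.norm_eq_abs, abs_of_nonneg]
          have := betaI_nonneg a b
          have := Real.rpow_nonneg (show (0:ℝ) ≤ t - r by linarith) (a + b - 1)
          positivity
      _ ≤ betaI a b * t ^ (a + b - 1) * |g r| := hbound

end NoSolFub

namespace NoSolFub2
open NoSolAux NoSolAux2 NoSolAux3 NoSolFub

variable {a b t : ℝ} {g : ℝ → ℝ}

/-- identify the inner integral (in the second variable) -/
lemma inner_eq (ht : 0 < t) {s : ℝ} (hs : s ∈ Ioc (0:ℝ) t) :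
    (∫ r, (if r < s then (t - s) ^ (a - 1) * ((s - r) ^ (b - 1) * g r) else 0)
        ∂(volume.restrict (Ioc (0:ℝ) t)))
      = (t - s) ^ (a - 1) * ∫ r in Ioc (0:ℝ) s, (s - r) ^ (b - 1) * g r := by
  have heq : (fun r => if r < s then (t - s) ^ (a - 1) * ((s - r) ^ (b - 1) * g r) else 0)
      = (Iio s).indicator (fun r => (t - s) ^ (a - 1) * ((s - r) ^ (b - 1) * g r)) := by
    funext r
    by_cases h : r < s <;> simp [Set.indicator_apply, Set.mem_Iio, h]
  rw [heq, integral_indicator measurableSet_Iio,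
    Measure.restrict_restrict measurableSet_Iio]
  have hset : Iio s ∩ Ioc 0 t = Ioo 0 s := by
    ext r
    simp only [Set.mem_inter_iff, Set.mem_Iio, Set.mem_Ioc, Set.mem_Ioo]
    constructor
    · rintro ⟨h1, h2, _⟩; exact ⟨h2, h1⟩
    · rintro ⟨h1, h2⟩; exact ⟨h2, h1, le_trans h2.le hs.2⟩
  rw [hset, ← integral_Ioc_eq_integral_Ioo, integral_const_mul _ _]

/-- identify the outer integral (in the first variable) -/
lemma outer_eq (ha : 0 < a) (hb : 0 < b) (ht : 0 < t) {r : ℝ} (hr : r ∈ Ioo (0:ℝ) t) :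
    (∫ s, (if r < s then (t - s) ^ (a - 1) * ((s - r) ^ (b - 1) * g r) else 0)
        ∂(volume.restrict (Ioc (0:ℝ) t)))
      = betaI a b * ((t - r) ^ (a + b - 1) * g r) := by
  have heq : (fun s => if r < s then (t - s) ^ (a - 1) * ((s - r) ^ (b - 1) * g r) else 0)
      = (Ioi r).indicator (fun s => ((t - s) ^ (a - 1) * (s - r) ^ (b - 1)) * g r) := by
    funext s
    by_cases h : r < s <;> simp [Set.indicator_apply, Set.mem_Ioi, h, mul_assoc]
  rw [heq, integral_indicator measurableSet_Ioi,
    Measure.restrict_restrict measurableSet_Ioi]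
  have hset : Ioi r ∩ Ioc 0 t = Ioc r t := by
    ext s
    simp only [Set.mem_inter_iff, Set.mem_Ioi, Set.mem_Ioc]
    constructor
    · rintro ⟨h1, _, h3⟩; exact ⟨h1, h3⟩
    · rintro ⟨h1, h2⟩; exact ⟨h1, lt_trans hr.1 h1, h2⟩
  rw [hset, integral_mul_const, ← intervalIntegral.integral_of_le hr.2.le,
    beta_subst ha hb hr.2]
  ring

/-- the main Fubini-type lemma -/
lemma fub (ha : 0 < a) (ha1 : a ≤ 1) (hb : 0 < b) (hb1 : b ≤ 1) (hab : 1 ≤ a + b)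
    (ht : 0 < t) (hgm : Measurable g) (hgi : IntegrableOn g (Ioc 0 t) volume) :
    ∫ s in Ioc (0:ℝ) t, (t - s) ^ (a - 1) * ∫ r in Ioc (0:ℝ) s, (s - r) ^ (b - 1) * g r
      = betaI a b * ∫ r in Ioc (0:ℝ) t, (t - r) ^ (a + b - 1) * g r := by
  have hint := prod_integrable ha ha1 hb hb1 hab ht hgm hgi
  have hswap := MeasureTheory.integral_integral_swap
    (f := fun s r => if r < s then (t - s) ^ (a - 1) * ((s - r) ^ (b - 1) * g r) else 0)
    (μ := volume.restrict (Ioc (0:ℝ) t)) (ν := volume.restrict (Ioc (0:ℝ) t)) hint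
  have hL : (∫ s, (∫ r, (if r < s then (t - s) ^ (a - 1) * ((s - r) ^ (b - 1) * g r) else 0)
        ∂(volume.restrict (Ioc (0:ℝ) t))) ∂(volume.restrict (Ioc (0:ℝ) t)))
      = ∫ s in Ioc (0:ℝ) t, (t - s) ^ (a - 1) * ∫ r in Ioc (0:ℝ) s, (s - r) ^ (b - 1) * g r := by
    apply integral_congr_ae
    filter_upwards [ae_restrict_mem measurableSet_Ioc] with s hs
    exact inner_eq ht hs
  have hR : (∫ r, (∫ s, (if r < s then (t - s) ^ (a - 1) * ((s - r) ^ (b - 1) * g r) else 0)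
        ∂(volume.restrict (Ioc (0:ℝ) t))) ∂(volume.restrict (Ioc (0:ℝ) t)))
      = betaI a b * ∫ r in Ioc (0:ℝ) t, (t - r) ^ (a + b - 1) * g r := by
    rw [← integral_const_mul _ _]
    apply integral_congr_ae
    filter_upwards [ae_Ioo (t := t)] with r hr
    exact outer_eq ha hb ht hr
  rw [← hL, hswap, hR]

/-- integrability of `s ↦ (t-s)^(a-1) * ∫ r in Ioc 0 s, (s-r)^(b-1) g r` on `Ioc 0 t` -/
lemma inner_integrableOn (ha : 0 < a) (ha1 : a ≤ 1) (hb : 0 < b) (hb1 : b ≤ 1)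
    (hab : 1 ≤ a + b) (ht : 0 < t) (hgm : Measurable g)
    (hgi : IntegrableOn g (Ioc 0 t) volume) :
    IntegrableOn (fun s => (t - s) ^ (a - 1) * ∫ r in Ioc (0:ℝ) s, (s - r) ^ (b - 1) * g r)
      (Ioc (0:ℝ) t) volume := by
  have hint := prod_integrable ha ha1 hb hb1 hab ht hgm hgi
  have := hint.integral_prod_left
  apply this.congr
  filter_upwards [ae_restrict_mem measurableSet_Ioc] with s hs
  exact inner_eq ht hs

end NoSolFub2

namespace NoSolDiff
open Filter

/-- a locally integrable function on `ℝ` with vanishing integrals on all `Ioc` intervals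
vanishes a.e. -/
lemma ae_zero_of_forall_Ioc (h : ℝ → ℝ) (hint : Integrable h volume)
    (h0 : ∀ a b : ℝ, ∫ x in Ioc a b, h x = 0) :
    ∀ᵐ x : ℝ, h x = 0 := by
  have hloc : LocallyIntegrable h volume := hint.locallyIntegrable
  filter_upwards [IsUnifLocDoublingMeasure.ae_tendsto_average (μ := volume) hloc 1] with x hx
  have hev : ∀ᶠ r in nhdsWithin (0:ℝ) (Ioi 0), x ∈ Metric.closedBall x (1 * r) := by
    filter_upwards [self_mem_nhdsWithin] with r hr
    have hr' : (0:ℝ) < r := hr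
    exact Metric.mem_closedBall_self (by linarith : (0:ℝ) ≤ 1 * r)
  have htend := hx (fun _ : ℝ => x) id tendsto_id hev
  have hz : ∀ r : ℝ, ⨍ y in Metric.closedBall x r, h y = 0 := by
    intro r
    rw [Real.closedBall_eq_Icc, setAverage_eq, integral_Icc_eq_integral_Ioc, h0]
    simp
  have h2 : Tendsto (fun _ : ℝ => (0:ℝ)) (nhdsWithin (0:ℝ) (Ioi 0)) (nhds (h x)) :=
    Filter.Tendsto.congr (fun r => by simpa using hz r) htend
  exact tendsto_nhds_unique h2 tendsto_const_nhds

end NoSolDiff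

open NoSolAux NoSolAux2 NoSolAux3 NoSolFub NoSolFub2 NoSolDiff in
/-- If `σ ∈ L^p(0,T)` is such that `J^{1/p} σ` is essentially unbounded on `[0,T]`, then the
Caputo problem `ᶜD^{1/p} φ = φ + σ` a.e. on `[0,T]` (formulated as
`J^{1-1/p}(φ - φ(0))(t) = ∫₀ᵗ (φ(s) + σ(s)) ds`) has no continuous solution. -/
theorem no_continuous_solution_of_unbounded_rlInt
    (T p : ℝ) (hT : 0 < T) (hp : 1 < p)
    (σ : ℝ → ℝ)
    (hσ : MemLp σ (ENNReal.ofReal p) (volume.restrict (Icc (0:ℝ) T)))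
    (hunb : ∀ M > (0:ℝ), 0 < volume {t ∈ Icc (0:ℝ) T | M < |rlInt (1 / p) σ t|}) :
    ¬ ∃ φ : ℝ → ℝ, ContinuousOn φ (Icc (0:ℝ) T) ∧
      ∀ t ∈ Icc (0:ℝ) T,
        rlInt (1 - 1 / p) (fun s => φ s - φ 0) t = ∫ s in (0:ℝ)..t, (φ s + σ s) := by
  rintro ⟨φ, hφc, hsol⟩
  have hp0 : 0 < p := lt_trans one_pos hp
  set α : ℝ := 1 / p with hαdef
  have hα0 : 0 < α := one_div_pos.mpr hp0
  have hα1 : α < 1 := by rw [hαdef, div_lt_one hp0]; exact hp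
  set β : ℝ := 1 - α with hβdef
  have hβ0 : 0 < β := by rw [hβdef]; linarith
  have hβ1 : β ≤ 1 := by rw [hβdef]; linarith
  have hαβ : α + β = 1 := by rw [hβdef]; ring
  have hΓα : 0 < Real.Gamma α := Real.Gamma_pos_of_pos hα0
  have hΓβ : 0 < Real.Gamma β := Real.Gamma_pos_of_pos hβ0
  -- continuous extension of φ
  set Φ : ℝ → ℝ := fun x => φ (max 0 (min x T)) with hΦdef
  have hmem : ∀ x : ℝ, max 0 (min x T) ∈ Icc (0:ℝ) T :=
    fun x => ⟨le_max_left _ _, max_le hT.le (min_le_right x T)⟩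
  have hΦc : Continuous Φ :=
    hφc.comp_continuous (continuous_const.max (continuous_id.min continuous_const)) hmem
  have hΦeq : ∀ x ∈ Icc (0:ℝ) T, Φ x = φ x := by
    intro x hx
    rw [hΦdef]
    simp only [min_eq_left hx.2, max_eq_right hx.1]
  have hΦ0 : Φ 0 = φ 0 := hΦeq 0 ⟨le_refl 0, hT.le⟩
  set ψ : ℝ → ℝ := fun s => Φ s - Φ 0 with hψdef
  have hψc : Continuous ψ := hΦc.sub continuous_const
  have hψm : Measurable ψ := hψc.measurable
  -- measurable version of σ
  obtain ⟨σ', hσ'sm, hσae⟩ := hσ.aestronglyMeasurable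
  have hσ'm : Measurable σ' := hσ'sm.measurable
  haveI hfinm : IsFiniteMeasure (volume.restrict (Icc (0:ℝ) T)) :=
    ⟨by rw [Measure.restrict_apply_univ]; exact measure_Icc_lt_top⟩
  have hσint : Integrable σ (volume.restrict (Icc (0:ℝ) T)) :=
    hσ.integrable (ENNReal.one_le_ofReal.mpr hp.le)
  have hσ'int : IntegrableOn σ' (Icc (0:ℝ) T) volume := hσint.congr hσae
  -- the combined right-hand side
  set g : ℝ → ℝ := fun s => Φ s + σ' s with hgdef
  have hgm : Measurable g := hΦc.measurable.add hσ'm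
  have hgiT : IntegrableOn g (Ioc (0:ℝ) T) volume :=
    (hΦc.integrableOn_Ioc).add (hσ'int.mono_set Set.Ioc_subset_Icc_self)
  have hψiT : IntegrableOn ψ (Ioc (0:ℝ) T) volume := hψc.integrableOn_Ioc
  -- the equation, in set-integral form
  have hEQ : ∀ c ∈ Icc (0:ℝ) T,
      ∫ s in Ioc (0:ℝ) c, (c - s) ^ (β - 1) * ψ s
        = Real.Gamma β * ∫ s in Ioc (0:ℝ) c, g s := by
    intro c hc
    have h1 := hsol c hc
    rw [rlInt, intervalIntegral.integral_of_le hc.1, intervalIntegral.integral_of_le hc.1] at h1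
    have hL : ∫ s in Ioc (0:ℝ) c, (c - s) ^ (β - 1) • (φ s - φ 0)
        = ∫ s in Ioc (0:ℝ) c, (c - s) ^ (β - 1) * ψ s := by
      apply setIntegral_congr_fun measurableSet_Ioc
      intro s hs
      have hsI : s ∈ Icc (0:ℝ) T := ⟨hs.1.le, le_trans hs.2 hc.2⟩
      dsimp only
      rw [smul_eq_mul, hψdef]
      dsimp only
      rw [hΦeq s hsI, hΦ0]
    have hR : ∫ s in Ioc (0:ℝ) c, (φ s + σ s) = ∫ s in Ioc (0:ℝ) c, g s := by
      apply integral_congr_ae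
      have hsub : Ioc (0:ℝ) c ⊆ Icc (0:ℝ) T := fun x hx => ⟨hx.1.le, le_trans hx.2 hc.2⟩
      filter_upwards [ae_restrict_of_ae_restrict_of_subset hsub hσae,
        ae_restrict_mem measurableSet_Ioc] with s h1' h2'
      rw [hgdef]
      dsimp only
      rw [h1', hΦeq s (hsub h2')]
    rw [hL, hR, smul_eq_mul, inv_mul_eq_iff_eq_mul₀ hΓβ.ne'] at h1
    exact h1
  -- the fractional integral of g of order α
  set G : ℝ → ℝ := fun s => ∫ r in Ioc (0:ℝ) s, (s - r) ^ (α - 1) * g r with hGdef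
  have hGiT : IntegrableOn G (Ioc (0:ℝ) T) volume := by
    have h := NoSolFub2.inner_integrableOn (a := 1) (b := α) (t := T) (g := g)
      one_pos le_rfl hα0 hα1.le (by linarith) hT hgm hgiT
    have heq1 : (fun s => (T - s) ^ ((1:ℝ) - 1) * ∫ r in Ioc (0:ℝ) s, (s - r) ^ (α - 1) * g r)
        = G := by
      funext s
      rw [hGdef, show (1:ℝ) - 1 = 0 by norm_num, Real.rpow_zero, one_mul]
    rwa [heq1] at h
  -- the key identity
  set F : ℝ → ℝ := fun x => Real.Gamma α * ψ x - G x with hFdef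
  have key : ∀ c ∈ Icc (0:ℝ) T, ∫ x in Ioc (0:ℝ) c, F x = 0 := by
    intro c hc
    rcases eq_or_lt_of_le hc.1 with h0 | h0
    · rw [← h0]; simp
    have hgic : IntegrableOn g (Ioc (0:ℝ) c) volume :=
      hgiT.mono_set (Set.Ioc_subset_Ioc_right hc.2)
    have hψic : IntegrableOn ψ (Ioc (0:ℝ) c) volume :=
      hψiT.mono_set (Set.Ioc_subset_Ioc_right hc.2)
    have hGic : IntegrableOn G (Ioc (0:ℝ) c) volume :=
      hGiT.mono_set (Set.Ioc_subset_Ioc_right hc.2)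
    -- first chain
    have hchain1 : ∫ s in Ioc (0:ℝ) c, (c - s) ^ (α - 1) * ∫ r in Ioc (0:ℝ) s, (s - r) ^ (β - 1) * ψ r
        = Real.Gamma α * Real.Gamma β * ∫ r in Ioc (0:ℝ) c, ψ r := by
      rw [NoSolFub2.fub hα0 hα1.le hβ0 hβ1 (by linarith) h0 hψm hψic]
      rw [show α + β - 1 = 0 by linarith]
      rw [show (∫ r in Ioc (0:ℝ) c, (c - r) ^ (0:ℝ) * ψ r) = ∫ r in Ioc (0:ℝ) c, ψ r from
        setIntegral_congr_fun measurableSet_Ioc fun r _ => by rw [Real.rpow_zero, one_mul]]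
      rw [hβdef, betaI_eq_Gamma hα0 hα1, ← hβdef]
    have hchain2 : ∫ s in Ioc (0:ℝ) c, (c - s) ^ (α - 1) * ∫ r in Ioc (0:ℝ) s, (s - r) ^ (β - 1) * ψ r
        = Real.Gamma β * ∫ s in Ioc (0:ℝ) c, (c - s) ^ (α - 1) * ∫ r in Ioc (0:ℝ) s, (s - r) ^ ((1:ℝ) - 1) * g r := by
      rw [← integral_const_mul]
      apply setIntegral_congr_fun measurableSet_Ioc
      intro s hs
      have hsI : s ∈ Icc (0:ℝ) T := ⟨hs.1.le, le_trans hs.2 hc.2⟩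
      dsimp only
      rw [hEQ s hsI]
      rw [show (∫ r in Ioc (0:ℝ) s, (s - r) ^ ((1:ℝ) - 1) * g r) = ∫ r in Ioc (0:ℝ) s, g r from
        setIntegral_congr_fun measurableSet_Ioc fun r _ => by
          rw [show (1:ℝ) - 1 = 0 by norm_num, Real.rpow_zero, one_mul]]
      ring
    have hchain3 : ∫ s in Ioc (0:ℝ) c, (c - s) ^ (α - 1) * ∫ r in Ioc (0:ℝ) s, (s - r) ^ ((1:ℝ) - 1) * g r
        = betaI α 1 * ∫ r in Ioc (0:ℝ) c, (c - r) ^ (α + 1 - 1) * g r :=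
      NoSolFub2.fub hα0 hα1.le one_pos le_rfl (by linarith) h0 hgm hgic
    have hchain4 : ∫ s in Ioc (0:ℝ) c, G s
        = betaI 1 α * ∫ r in Ioc (0:ℝ) c, (c - r) ^ (1 + α - 1) * g r := by
      rw [← NoSolFub2.fub one_pos le_rfl hα0 hα1.le (by linarith) h0 hgm hgic]
      apply setIntegral_congr_fun measurableSet_Ioc
      intro s hs
      rw [hGdef]
      dsimp only
      rw [show (1:ℝ) - 1 = 0 by norm_num, Real.rpow_zero, one_mul]
    -- combine
    have hGψ : Real.Gamma α * ∫ r in Ioc (0:ℝ) c, ψ r = ∫ s in Ioc (0:ℝ) c, G s := by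
      have e1 : betaI α 1 = 1 / α := betaI_left α hα0
      have e2 : betaI 1 α = 1 / α := betaI_right α hα0
      have e3 : α + 1 - 1 = α := by ring
      have e4 : (1:ℝ) + α - 1 = α := by ring
      have hAB : Real.Gamma β * (Real.Gamma α * ∫ r in Ioc (0:ℝ) c, ψ r)
          = Real.Gamma β * ∫ s in Ioc (0:ℝ) c, G s := by
        calc Real.Gamma β * (Real.Gamma α * ∫ r in Ioc (0:ℝ) c, ψ r)
            = Real.Gamma α * Real.Gamma β * ∫ r in Ioc (0:ℝ) c, ψ r := by ring
          _ = Real.Gamma β * (betaI α 1 * ∫ r in Ioc (0:ℝ) c, (c - r) ^ (α + 1 - 1) * g r) := by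
              rw [← hchain1, hchain2, hchain3]
          _ = Real.Gamma β * ∫ s in Ioc (0:ℝ) c, G s := by
              rw [hchain4, e1, e2, e3, e4]
      exact mul_left_cancel₀ hΓβ.ne' hAB
    rw [hFdef]
    have : ∫ x in Ioc (0:ℝ) c, (Real.Gamma α * ψ x - G x)
        = (∫ x in Ioc (0:ℝ) c, Real.Gamma α * ψ x) - ∫ x in Ioc (0:ℝ) c, G x :=
      integral_sub (hψic.const_mul _) hGic
    rw [this, integral_const_mul, hGψ, sub_self]
  -- conclude `Γ α * ψ = G` a.e. on `Ioc 0 T`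
  have hFiT : IntegrableOn F (Ioc (0:ℝ) T) volume := (hψiT.const_mul _).sub hGiT
  have hind : Integrable (Set.indicator (Ioc (0:ℝ) T) F) volume :=
    (integrable_indicator_iff measurableSet_Ioc).2 hFiT
  have h00 : ∀ u v : ℝ, ∫ x in Ioc u v, Set.indicator (Ioc (0:ℝ) T) F x = 0 := by
    intro u v
    rw [setIntegral_indicator measurableSet_Ioc, Set.Ioc_inter_Ioc]
    by_cases huv : u ⊔ 0 < v ⊓ T
    · have hu : u ⊔ 0 ∈ Icc (0:ℝ) T :=
        ⟨le_max_right _ _, le_trans huv.le (min_le_right _ _)⟩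
      have hv : v ⊓ T ∈ Icc (0:ℝ) T :=
        ⟨le_trans (le_max_right u 0) huv.le, min_le_right _ _⟩
      have h1 : IntervalIntegrable F volume 0 (u ⊔ 0) := by
        rw [intervalIntegrable_iff, Set.uIoc_of_le hu.1]
        exact hFiT.mono_set (Set.Ioc_subset_Ioc_right hu.2)
      have h2 : IntervalIntegrable F volume 0 (v ⊓ T) := by
        rw [intervalIntegrable_iff, Set.uIoc_of_le hv.1]
        exact hFiT.mono_set (Set.Ioc_subset_Ioc_right hv.2)
      have h3 := intervalIntegral.integral_interval_sub_left h2 h1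
      rw [← intervalIntegral.integral_of_le huv.le, ← h3,
        intervalIntegral.integral_of_le hu.1, intervalIntegral.integral_of_le hv.1,
        key _ hv, key _ hu, sub_zero]
    · rw [Set.Ioc_eq_empty huv]
      simp
  have haeF := NoSolDiff.ae_zero_of_forall_Ioc _ hind h00
  -- a.e. integrability of the σ' sections
  have hprod := NoSolFub.prod_integrable (a := 1) (b := α) (t := T) (g := σ')
    one_pos le_rfl hα0 hα1.le (by linarith) hT hσ'm (hσ'int.mono_set Set.Ioc_subset_Icc_self)
  have hsec := hprod.prod_right_ae
  -- bounds for ψ and Φ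
  obtain ⟨C, hC⟩ := (isCompact_Icc (a := (0:ℝ)) (b := T)).exists_bound_of_continuousOn
    hψc.continuousOn
  have hC0 : 0 ≤ C := le_trans (norm_nonneg (ψ 0)) (hC 0 ⟨le_refl 0, hT.le⟩)
  obtain ⟨C₂, hC₂⟩ := (isCompact_Icc (a := (0:ℝ)) (b := T)).exists_bound_of_continuousOn
    hΦc.continuousOn
  have hC₂0 : 0 ≤ C₂ := le_trans (norm_nonneg (Φ 0)) (hC₂ 0 ⟨le_refl 0, hT.le⟩)
  set M₀ : ℝ := (Real.Gamma α)⁻¹ * (Real.Gamma α * C + C₂ * T ^ α / α) with hM₀def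
  have hM₀0 : 0 ≤ M₀ := by
    rw [hM₀def]
    have h1 : (0:ℝ) ≤ T ^ α := Real.rpow_nonneg hT.le α
    positivity
  -- the essential bound
  have hbound : ∀ᵐ s ∂(volume.restrict (Ioc (0:ℝ) T)), |rlInt α σ s| ≤ M₀ := by
    filter_upwards [ae_restrict_of_ae haeF, NoSolFub.ae_Ioo (t := T), hsec]
      with s hs0 hsIoo hsint
    have hs0T : 0 < s := hsIoo.1
    have hsT : s ≤ T := hsIoo.2.le
    have hsIcc : s ∈ Icc (0:ℝ) T := ⟨hs0T.le, hsT⟩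
    -- G s = Γ α * ψ s
    have hGs : G s = Real.Gamma α * ψ s := by
      have : Set.indicator (Ioc (0:ℝ) T) F s = F s :=
        Set.indicator_of_mem (show s ∈ Ioc (0:ℝ) T from ⟨hs0T, hsT⟩) F
      rw [this, hFdef] at hs0
      dsimp only at hs0
      linarith [hs0]
    -- integrability of the σ' part
    have hσ'sec : IntegrableOn (fun r => (s - r) ^ (α - 1) * σ' r) (Ioc (0:ℝ) s) volume := by
      have heq2 : (fun r => if r < s then (T - s) ^ ((1:ℝ) - 1) * ((s - r) ^ (α - 1) * σ' r) else 0)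
          = (Iio s).indicator (fun r => (s - r) ^ (α - 1) * σ' r) := by
        funext r
        by_cases h : r < s <;>
          simp [Set.indicator_apply, Set.mem_Iio, h, show (1:ℝ) - 1 = 0 by norm_num,
            Real.rpow_zero]
      rw [heq2] at hsint
      rw [integrable_indicator_iff measurableSet_Iio, IntegrableOn,
        Measure.restrict_restrict measurableSet_Iio] at hsint
      have hset : Iio s ∩ Ioc 0 T = Ioo 0 s := by
        ext r
        simp only [Set.mem_inter_iff, Set.mem_Iio, Set.mem_Ioc, Set.mem_Ioo]
        constructor
        · rintro ⟨h1, h2, _⟩; exact ⟨h2, h1⟩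
        · rintro ⟨h1, h2⟩; exact ⟨h2, h1, le_trans h2.le hsT⟩
      rw [hset] at hsint
      exact MeasureTheory.IntegrableOn.congr_set_ae hsint Ioo_ae_eq_Ioc.symm
    -- integrability and bound for the Φ part
    have hkerint : IntegrableOn (fun r => (s - r) ^ (α - 1)) (Ioc (0:ℝ) s) volume := by
      have := ker_intervalIntegrable hα0 s 0 s
      rwa [intervalIntegrable_iff, Set.uIoc_of_le hs0T.le] at this
    have hΦsec : IntegrableOn (fun r => (s - r) ^ (α - 1) * Φ r) (Ioc (0:ℝ) s) volume := by
      apply (hkerint.mul_const C₂).mono'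
        ((((measurable_const.sub measurable_id').pow measurable_const).mul
          hΦc.measurable).aestronglyMeasurable.restrict)
      filter_upwards [ae_restrict_mem measurableSet_Ioc] with r hr
      have h1 : (0:ℝ) ≤ s - r := by linarith [hr.2]
      show ‖(s - r) ^ (α - 1) * Φ r‖ ≤ (s - r) ^ (α - 1) * C₂
      rw [Real.norm_eq_abs, abs_mul, abs_of_nonneg (Real.rpow_nonneg h1 _)]
      exact mul_le_mul_of_nonneg_left (hC₂ r ⟨hr.1.le, le_trans hr.2 hsT⟩) (Real.rpow_nonneg h1 _)
    -- value of the Φ-part bound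
    have hΦval : |∫ r in Ioc (0:ℝ) s, (s - r) ^ (α - 1) * Φ r| ≤ C₂ * T ^ α / α := by
      have h1 : ‖∫ r in Ioc (0:ℝ) s, (s - r) ^ (α - 1) * Φ r‖
          ≤ ∫ r in Ioc (0:ℝ) s, (s - r) ^ (α - 1) * C₂ := by
        apply norm_integral_le_of_norm_le (hkerint.mul_const C₂)
        filter_upwards [ae_restrict_mem measurableSet_Ioc] with r hr
        have h1' : (0:ℝ) ≤ s - r := by linarith [hr.2]
        rw [Real.norm_eq_abs, abs_mul, abs_of_nonneg (Real.rpow_nonneg h1' _)]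
        exact mul_le_mul_of_nonneg_left (hC₂ r ⟨hr.1.le, le_trans hr.2 hsT⟩)
          (Real.rpow_nonneg h1' _)
      rw [Real.norm_eq_abs] at h1
      have h2 : ∫ r in Ioc (0:ℝ) s, (s - r) ^ (α - 1) * C₂ = s ^ α / α * C₂ := by
        rw [integral_mul_const, ← intervalIntegral.integral_of_le hs0T.le,
          ker_integral hα0 hs0T.le, sub_zero]
      have h3 : s ^ α ≤ T ^ α := Real.rpow_le_rpow hs0T.le hsT hα0.le
      have h4 : s ^ α / α * C₂ ≤ T ^ α / α * C₂ := by gcongr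
      calc |∫ r in Ioc (0:ℝ) s, (s - r) ^ (α - 1) * Φ r|
          ≤ s ^ α / α * C₂ := by rw [← h2]; exact h1
        _ ≤ T ^ α / α * C₂ := h4
        _ = C₂ * T ^ α / α := by ring
    -- decompose G s
    have hsplit : G s = (∫ r in Ioc (0:ℝ) s, (s - r) ^ (α - 1) * Φ r)
        + ∫ r in Ioc (0:ℝ) s, (s - r) ^ (α - 1) * σ' r := by
      rw [hGdef]
      dsimp only
      rw [show (fun r => (s - r) ^ (α - 1) * g r)
          = fun r => (s - r) ^ (α - 1) * Φ r + (s - r) ^ (α - 1) * σ' r from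
        funext fun r => by simp only [hgdef]; ring]
      exact integral_add hΦsec hσ'sec
    -- replace σ by σ'
    have hσeq : ∫ r in Ioc (0:ℝ) s, (s - r) ^ (α - 1) * σ r
        = ∫ r in Ioc (0:ℝ) s, (s - r) ^ (α - 1) * σ' r := by
      apply integral_congr_ae
      have hsub : Ioc (0:ℝ) s ⊆ Icc (0:ℝ) T := fun x hx => ⟨hx.1.le, le_trans hx.2 hsT⟩
      filter_upwards [ae_restrict_of_ae_restrict_of_subset hsub hσae] with r hr
      rw [hr]
    -- compute rlInt α σ s
    have hrl : rlInt α σ s = (Real.Gamma α)⁻¹ * ∫ r in Ioc (0:ℝ) s, (s - r) ^ (α - 1) * σ r := by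
      rw [rlInt, intervalIntegral.integral_of_le hs0T.le]
      simp only [smul_eq_mul]
    rw [hrl, hσeq, show (∫ r in Ioc (0:ℝ) s, (s - r) ^ (α - 1) * σ' r)
        = G s - ∫ r in Ioc (0:ℝ) s, (s - r) ^ (α - 1) * Φ r from by rw [hsplit]; ring, hGs]
    rw [abs_mul, abs_of_nonneg (inv_nonneg.mpr hΓα.le), hM₀def]
    apply mul_le_mul_of_nonneg_left _ (inv_nonneg.mpr hΓα.le)
    have habs : ∀ x y : ℝ, |x - y| ≤ |x| + |y| := by
      intro x y
      calc |x - y| = |x + -y| := by rw [sub_eq_add_neg]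
        _ ≤ |x| + |-y| := abs_add_le _ _
        _ = |x| + |y| := by rw [abs_neg]
    calc |Real.Gamma α * ψ s - ∫ r in Ioc (0:ℝ) s, (s - r) ^ (α - 1) * Φ r|
        ≤ |Real.Gamma α * ψ s| + |∫ r in Ioc (0:ℝ) s, (s - r) ^ (α - 1) * Φ r| := habs _ _
      _ ≤ Real.Gamma α * C + C₂ * T ^ α / α := by
          apply add_le_add _ hΦval
          rw [abs_mul, abs_of_nonneg hΓα.le]
          exact mul_le_mul_of_nonneg_left (hC s hsIcc) hΓα.le
  -- final contradiction
  set M : ℝ := M₀ + 1 with hMdef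
  have hMpos : 0 < M := by rw [hMdef]; linarith
  have hpos := hunb M hMpos
  have hnull : volume ({x : ℝ | M < |rlInt α σ x|} ∩ Ioc (0:ℝ) T) = 0 := by
    have h1 : ∀ᵐ x ∂(volume.restrict (Ioc (0:ℝ) T)), ¬ (M < |rlInt α σ x|) := by
      filter_upwards [hbound] with x hx
      push_neg
      rw [hMdef]; linarith
    rw [ae_iff] at h1
    simp only [not_not] at h1
    rwa [Measure.restrict_apply' measurableSet_Ioc] at h1
  have hsub2 : {t | t ∈ Icc (0:ℝ) T ∧ M < |rlInt α σ t|}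
      ⊆ {x : ℝ | M < |rlInt α σ x|} ∩ Ioc (0:ℝ) T := by
    rintro x ⟨hx1, hx2⟩
    refine ⟨hx2, ?_, hx1.2⟩
    rcases eq_or_lt_of_le hx1.1 with h | h
    · exfalso
      have hz : rlInt α σ 0 = 0 := by
        rw [rlInt, intervalIntegral.integral_same, smul_zero]
      rw [← h, hz, abs_zero] at hx2
      linarith
    · exact h
  have hle : volume {t | t ∈ Icc (0:ℝ) T ∧ M < |rlInt α σ t|}
      ≤ volume ({x : ℝ | M < |rlInt α σ x|} ∩ Ioc (0:ℝ) T) := measure_mono hsub2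
  rw [hnull] at hle
  exact absurd (le_antisymm hle (by positivity)) hpos.ne'
end

section
/- For every p ∈ (1,∞) and every T > 0 there exists σ ∈ L^p(0,T;ℝ) such that the (a.e. defined) function t ↦ J^{1/p}σ(t) = (1/Γ(1/p)) ∫₀ᵗ (t−s)^{1/p − 1} σ(s) ds is essentially unbounded on [0,T], i.e., for every M > 0 the set {t ∈ [0,T] : |J^{1/p}σ(t)| > M} has positive Lebesgue measure. -/
open MeasureTheory Real Set
open Filter

/-- The singular function used in the Hardy–Littlewood counterexample. -/
noncomputable def HLsigma (α γ t₀ : ℝ) : ℝ → ℝ :=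
  (Set.Ioo (0:ℝ) t₀).indicator fun s => (t₀ - s) ^ (-α) * (-Real.log (t₀ - s)) ^ (-γ)

lemma HLsigma_measurable (α γ t₀ : ℝ) : Measurable (HLsigma α γ t₀) := by
  apply Measurable.indicator _ measurableSet_Ioo
  have m2 : Measurable fun s : ℝ => -Real.log (t₀ - s) :=
    (Real.measurable_log.comp (measurable_const.sub measurable_id)).neg
  fun_prop

/-- basic facts on the interval -/
lemma HL_facts {t₀ s : ℝ} (ht₀e : t₀ ≤ Real.exp (-1)) (hs : s ∈ Set.Ioo 0 t₀) :
    0 < t₀ - s ∧ t₀ - s < 1 ∧ 1 ≤ -Real.log (t₀ - s) := by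
  obtain ⟨hs0, hst⟩ := hs
  have h1 : 0 < t₀ - s := by linarith
  have he : Real.exp (-1) < 1 := by
    rw [Real.exp_lt_one_iff]; norm_num
  have h2 : t₀ - s < Real.exp (-1) := by linarith
  have h3 : Real.log (t₀ - s) ≤ -1 := by
    have := (Real.log_le_log_iff h1 (Real.exp_pos _)).mpr h2.le
    rwa [Real.log_exp] at this
  exact ⟨h1, by linarith, by linarith⟩

lemma HLsigma_nonneg {α γ t₀ : ℝ} (ht₀e : t₀ ≤ Real.exp (-1)) (s : ℝ) :
    0 ≤ HLsigma α γ t₀ s := by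
  apply Set.indicator_nonneg
  intro x hx
  obtain ⟨h1, _, h3⟩ := HL_facts ht₀e hx
  exact mul_nonneg (Real.rpow_nonneg h1.le _) (Real.rpow_nonneg (by linarith) _)

/-- `σ ∈ L^p`. -/
lemma HLsigma_memLp {p T α γ t₀ : ℝ} (hp0 : 0 < p) (hαp : α * p = 1) (hq1 : 1 < γ * p)
    (ht₀ : 0 < t₀) (ht₀e : t₀ ≤ Real.exp (-1)) :
    MemLp (HLsigma α γ t₀) (ENNReal.ofReal p) (volume.restrict (Set.Icc (0:ℝ) T)) := by
  set q := γ * p with hq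
  -- the function |σ|^p and its antiderivative
  set u : ℝ → ℝ := fun s => (t₀ - s)⁻¹ * (-Real.log (t₀ - s)) ^ (-q) with hu
  set H : ℝ → ℝ := fun s => -((-Real.log (t₀ - s)) ^ (1 - q)) / (q - 1) with hH
  have hqm : q - 1 ≠ 0 := by intro h; nlinarith
  -- continuity of H on [0, t₀]
  have hHcont : ContinuousOn H (Set.Icc 0 t₀) := by
    intro x hx
    rcases lt_or_eq_of_le hx.2 with hxt | hxt
    · apply ContinuousAt.continuousWithinAt
      have h1 : 0 < t₀ - x := by linarith
      have h3 : 1 ≤ -Real.log (t₀ - x) := by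
        rcases eq_or_lt_of_le hx.1 with h0 | h0
        · have he : Real.exp (-1) < 1 := by rw [Real.exp_lt_one_iff]; norm_num
          have h2 : t₀ - x ≤ Real.exp (-1) := by linarith
          have h3 : Real.log (t₀ - x) ≤ -1 := by
            have := (Real.log_le_log_iff h1 (Real.exp_pos _)).mpr h2
            rwa [Real.log_exp] at this
          linarith
        · exact (HL_facts ht₀e ⟨h0, hxt⟩).2.2
      have hc1 : ContinuousAt (fun s : ℝ => -Real.log (t₀ - s)) x :=
        (((continuous_const.sub continuous_id).continuousAt).log (by positivity)).neg
      exact ((hc1.rpow_const (Or.inl (by positivity))).neg.div_const _)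
    · -- continuity at the right endpoint t₀
      have hHt : H x = 0 := by
        rw [hH]; simp only [hxt, sub_self, Real.log_zero, neg_zero,
          Real.zero_rpow (by intro h; nlinarith : (1:ℝ) - q ≠ 0), neg_zero, zero_div]
      apply continuousWithinAt_diff_self.mp
      rw [ContinuousWithinAt, hHt]
      refine Filter.Tendsto.mono_left ?_ (nhdsWithin_mono x (t := Set.Iio x) ?_); swap
      · rintro y ⟨hy1, hy2⟩
        simp only [Set.mem_singleton_iff] at hy2
        exact Set.mem_Iio.mpr (lt_of_le_of_ne (by rw [hxt]; exact hy1.2) hy2)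
      · -- Tendsto H (𝓝[<] t₀) (𝓝 0)
        rw [hxt]
        have l1 : Tendsto (fun s : ℝ => t₀ - s) (nhdsWithin t₀ (Set.Iio t₀)) (nhdsWithin 0 (Set.Ioi 0)) := by
          apply tendsto_nhdsWithin_of_tendsto_nhds_of_eventually_within
          · have : Tendsto (fun s : ℝ => t₀ - s) (nhds t₀) (nhds (t₀ - t₀)) :=
              (continuous_const.sub continuous_id).continuousAt
            simpa using this.mono_left nhdsWithin_le_nhds
          · filter_upwards [self_mem_nhdsWithin] with s hs
            simp only [Set.mem_Ioi]; exact sub_pos.mpr hs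
        have l2 : Tendsto (fun s : ℝ => -Real.log (t₀ - s)) (nhdsWithin t₀ (Set.Iio t₀)) atTop := by
          apply Filter.Tendsto.comp tendsto_neg_atBot_atTop
          exact Real.tendsto_log_nhdsGT_zero.comp l1
        have l3 : Tendsto (fun s : ℝ => (-Real.log (t₀ - s)) ^ (1 - q)) (nhdsWithin t₀ (Set.Iio t₀)) (nhds 0) := by
          have := (tendsto_rpow_neg_atTop (by linarith : (0:ℝ) < q - 1)).comp l2
          simpa [neg_sub, Function.comp_def] using this
        have := (l3.neg).div_const (q - 1)
        simpa using this
  -- derivative of H is u on (0, t₀)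
  have hHderiv : ∀ x ∈ Set.Ioo (0:ℝ) t₀, HasDerivAt H (u x) x := by
    intro x hx
    obtain ⟨h1, h2, h3⟩ := HL_facts ht₀e hx
    have hd1 : HasDerivAt (fun s : ℝ => t₀ - s) (-1) x := by
      simpa using (hasDerivAt_id x).const_sub t₀
    have hd2 : HasDerivAt (fun s : ℝ => Real.log (t₀ - s)) ((t₀ - x)⁻¹ * (-1)) x :=
      (Real.hasDerivAt_log (ne_of_gt h1)).comp x hd1
    have hd3 : HasDerivAt (fun s : ℝ => -Real.log (t₀ - s)) ((t₀ - x)⁻¹) x := by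
      simpa using hd2.fun_neg
    have hd4 : HasDerivAt (fun s : ℝ => (-Real.log (t₀ - s)) ^ (1 - q))
        ((t₀ - x)⁻¹ * (1 - q) * (-Real.log (t₀ - x)) ^ (1 - q - 1)) x :=
      hd3.rpow_const (Or.inl (by linarith))
    have hd5 := (hd4.fun_neg).div_const (q - 1)
    have hexp : (1:ℝ) - q - 1 = -q := by ring
    rw [hexp] at hd5
    refine hd5.congr_deriv ?_
    rw [hu]
    field_simp
    ring
  -- nonnegativity of u on (0, t₀)
  have hu_nonneg : ∀ x ∈ Set.Ioo (0:ℝ) t₀, 0 ≤ u x := by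
    intro x hx
    obtain ⟨h1, h2, h3⟩ := HL_facts ht₀e hx
    exact mul_nonneg (by positivity) (Real.rpow_nonneg (by linarith) _)
  have hu_int : IntegrableOn u (Set.Ioc 0 t₀) volume :=
    intervalIntegral.integrableOn_deriv_of_nonneg hHcont hHderiv hu_nonneg
  have hind : Integrable ((Set.Ioo (0:ℝ) t₀).indicator u) volume :=
    (hu_int.mono_set Set.Ioo_subset_Ioc_self).integrable_indicator measurableSet_Ioo
  -- |σ|^p = indicator u
  have hp_ne : p ≠ 0 := ne_of_gt hp0
  have heq : ∀ s : ℝ, ‖HLsigma α γ t₀ s‖ ^ p = (Set.Ioo (0:ℝ) t₀).indicator u s := by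
    intro s
    by_cases hs : s ∈ Set.Ioo (0:ℝ) t₀
    · obtain ⟨h1, h2, h3⟩ := HL_facts ht₀e hs
      rw [HLsigma, Set.indicator_of_mem hs, Set.indicator_of_mem hs, hu]
      have hb1 : (0:ℝ) ≤ (t₀ - s) ^ (-α) := Real.rpow_nonneg h1.le _
      have hb2 : (0:ℝ) ≤ (-Real.log (t₀ - s)) ^ (-γ) := Real.rpow_nonneg (by linarith) _
      rw [Real.norm_eq_abs, abs_of_nonneg (mul_nonneg hb1 hb2),
        Real.mul_rpow hb1 hb2, ← Real.rpow_mul h1.le,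
        ← Real.rpow_mul (by linarith : (0:ℝ) ≤ -Real.log (t₀ - s)),
        show -α * p = (-1:ℝ) by rw [neg_mul, hαp],
        show -γ * p = -q by rw [neg_mul, ← hq],
        Real.rpow_neg_one]
    · rw [HLsigma, Set.indicator_of_notMem hs, Set.indicator_of_notMem hs,
        norm_zero, Real.zero_rpow hp_ne]
  -- conclude
  have haesm : AEStronglyMeasurable (HLsigma α γ t₀) (volume.restrict (Set.Icc (0:ℝ) T)) :=
    (HLsigma_measurable α γ t₀).aestronglyMeasurable
  have h0 : ENNReal.ofReal p ≠ 0 := by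
    simpa [ENNReal.ofReal_eq_zero] using hp0
  have htop : ENNReal.ofReal p ≠ ⊤ := ENNReal.ofReal_ne_top
  have := (memLp_norm_rpow_iff (p := ENNReal.ofReal p) (q := ENNReal.ofReal p) haesm h0 htop)
  rw [ENNReal.div_self h0 htop] at this
  apply this.mp
  rw [ENNReal.toReal_ofReal hp0.le]
  rw [memLp_one_iff_integrable]
  apply Integrable.congr (hind.restrict)
  filter_upwards with s
  exact (heq s).symm

/-- The key lower bound for the fractional integral near the singular point. -/
lemma HL_lower {α γ t₀ t : ℝ} (hα0 : 0 < α) (hα1 : α < 1) (hγ0 : 0 < γ) (hγ1 : γ < 1)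
    (ht₀ : 0 < t₀) (ht₀e : t₀ ≤ Real.exp (-1)) (ht : t ∈ Set.Ioo (3*t₀/4) t₀) :
    (2:ℝ)^(-α) / (1-γ) * ((-Real.log (t₀ - t))^(1-γ) - (-Real.log (t₀/4))^(1-γ))
      ≤ ∫ s in (0:ℝ)..t, (t - s)^(α-1) * HLsigma α γ t₀ s := by
  obtain ⟨ht1, ht2⟩ := ht
  set c : ℝ := t₀/2 with hc
  set h : ℝ := t₀ - t with hh
  set b : ℝ := t - h with hb
  have hhpos : 0 < h := by simp only [hh]; linarith
  have hh4 : h < t₀/4 := by simp only [hh]; linarith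
  have hcpos : 0 < c := by positivity
  have hcb : c < b := by simp only [hc, hb, hh]; linarith
  have hbt : b < t := by simp only [hb]; linarith
  have htpos : 0 < t := by linarith
  have hte : t < 1 := by
    have : Real.exp (-1) < 1 := by rw [Real.exp_lt_one_iff]; norm_num
    linarith
  set f : ℝ → ℝ := fun s => (t - s)^(α-1) * HLsigma α γ t₀ s with hf
  -- nonnegativity of f for s ≤ t
  have hf_nonneg : ∀ s, s ≤ t → 0 ≤ f s := by
    intro s hs
    exact mul_nonneg (Real.rpow_nonneg (by linarith) _) (HLsigma_nonneg ht₀e s)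
  -- interval integrability of f on [0, t]
  have hfint : IntervalIntegrable f volume 0 t := by
    rw [intervalIntegrable_iff_integrableOn_Ioc_of_le htpos.le]
    have hd_int : IntegrableOn (fun s => h^(-α) * (t-s)^(α-1)) (Set.Ioc 0 t) volume := by
      have h1 : IntervalIntegrable (fun x : ℝ => x ^ (α-1)) volume 0 t :=
        intervalIntegral.intervalIntegrable_rpow' (by linarith)
      have h2 := (h1.comp_sub_left t).symm
      simp only [sub_zero, sub_self] at h2
      rw [← intervalIntegrable_iff_integrableOn_Ioc_of_le htpos.le]
      exact h2.const_mul _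
    apply Integrable.mono hd_int
    · have m2 : Measurable fun s : ℝ => -Real.log (t₀ - s) :=
        (Real.measurable_log.comp (measurable_const.sub measurable_id)).neg
      have : Measurable f := by
        apply Measurable.mul _ (HLsigma_measurable α γ t₀)
        fun_prop
      exact this.aestronglyMeasurable
    · filter_upwards [ae_restrict_mem measurableSet_Ioc] with s hs
      obtain ⟨hs0, hst⟩ := hs
      have hts : 0 ≤ t - s := by linarith
      rw [Real.norm_eq_abs, Real.norm_eq_abs, abs_of_nonneg (hf_nonneg s hst),
        abs_of_nonneg (mul_nonneg (Real.rpow_nonneg hhpos.le _) (Real.rpow_nonneg hts _))]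
      rw [hf]
      rw [mul_comm (h^(-α)) _]
      apply mul_le_mul_of_nonneg_left _ (Real.rpow_nonneg hts _)
      -- σ s ≤ h^(-α)
      by_cases hmem : s ∈ Set.Ioo (0:ℝ) t₀
      · obtain ⟨h1, h2, h3⟩ := HL_facts ht₀e hmem
        rw [HLsigma, Set.indicator_of_mem hmem]
        have e1 : (-Real.log (t₀ - s)) ^ (-γ) ≤ 1 :=
          Real.rpow_le_one_of_one_le_of_nonpos h3 (by linarith)
        have e2 : (t₀ - s) ^ (-α) ≤ h ^ (-α) := by
          rw [Real.rpow_neg h1.le, Real.rpow_neg hhpos.le]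
          apply inv_anti₀ (Real.rpow_pos_of_pos hhpos _)
          apply Real.rpow_le_rpow hhpos.le (by simp only [hh]; linarith) hα0.le
        calc (t₀ - s) ^ (-α) * (-Real.log (t₀ - s)) ^ (-γ)
            ≤ (t₀ - s) ^ (-α) * 1 := by
              apply mul_le_mul_of_nonneg_left e1 (Real.rpow_nonneg h1.le _)
          _ = (t₀ - s) ^ (-α) := mul_one _
          _ ≤ h ^ (-α) := e2
      · rw [HLsigma, Set.indicator_of_notMem hmem]
        positivity
  -- split the integral and drop the outer nonnegative pieces
  have huIcc : Set.uIcc (0:ℝ) t = Set.Icc 0 t := Set.uIcc_of_le htpos.le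
  have hsub1 : Set.uIcc (0:ℝ) c ⊆ Set.uIcc (0:ℝ) t := by
    rw [Set.uIcc_of_le hcpos.le, huIcc]; exact Set.Icc_subset_Icc (le_refl _) (by linarith)
  have hsub2 : Set.uIcc c t ⊆ Set.uIcc (0:ℝ) t := by
    rw [Set.uIcc_of_le (by linarith : c ≤ t), huIcc]
    exact Set.Icc_subset_Icc (by linarith) (le_refl _)
  have hsub3 : Set.uIcc c b ⊆ Set.uIcc (0:ℝ) t := by
    rw [Set.uIcc_of_le hcb.le, huIcc]
    exact Set.Icc_subset_Icc (by linarith) (by linarith)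
  have hsub4 : Set.uIcc b t ⊆ Set.uIcc (0:ℝ) t := by
    rw [Set.uIcc_of_le hbt.le, huIcc]
    exact Set.Icc_subset_Icc (by linarith) (le_refl _)
  have hi1 : IntervalIntegrable f volume 0 c := hfint.mono_set hsub1
  have hi2 : IntervalIntegrable f volume c t := hfint.mono_set hsub2
  have hi3 : IntervalIntegrable f volume c b := hfint.mono_set hsub3
  have hi4 : IntervalIntegrable f volume b t := hfint.mono_set hsub4
  have hsplit1 : ∫ s in (0:ℝ)..t, f s = (∫ s in (0:ℝ)..c, f s) + ∫ s in c..t, f s :=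
    (intervalIntegral.integral_add_adjacent_intervals hi1 hi2).symm
  have hsplit2 : ∫ s in c..t, f s = (∫ s in c..b, f s) + ∫ s in b..t, f s :=
    (intervalIntegral.integral_add_adjacent_intervals hi3 hi4).symm
  have hnn1 : 0 ≤ ∫ s in (0:ℝ)..c, f s := by
    apply intervalIntegral.integral_nonneg (by linarith)
    intro u hu; exact hf_nonneg u (by rcases hu with ⟨_, h⟩; linarith)
  have hnn4 : 0 ≤ ∫ s in b..t, f s := by
    apply intervalIntegral.integral_nonneg (by linarith)
    intro u hu; exact hf_nonneg u hu.2
  -- the comparison function g and its antiderivative G on [c, b]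
  set Y : ℝ → ℝ := fun s => -Real.log (t - s) with hY
  set g : ℝ → ℝ := fun s => (2:ℝ)^(-α) * ((t - s)⁻¹ * Y s ^ (-γ)) with hg
  set G : ℝ → ℝ := fun s => (2:ℝ)^(-α) / (1-γ) * Y s ^ (1-γ) with hG
  have hfacts : ∀ s ∈ Set.Icc c b, 0 < t - s ∧ t - s < 1 ∧ 0 < Y s := by
    intro s hs
    have h1 : 0 < t - s := by rcases hs with ⟨_, h⟩; simp only [hb] at h; linarith
    have h2 : t - s < 1 := by rcases hs with ⟨h', _⟩; simp only [hc] at h'; linarith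
    exact ⟨h1, h2, by simp only [hY]; nlinarith [Real.log_neg h1 h2]⟩
  have hg_cont : ContinuousOn g (Set.uIcc c b) := by
    rw [Set.uIcc_of_le hcb.le]
    intro x hx
    obtain ⟨h1, h2, h3⟩ := hfacts x hx
    apply ContinuousAt.continuousWithinAt
    have hc1 : ContinuousAt (fun s : ℝ => t - s) x := (continuous_const.sub continuous_id).continuousAt
    have hc2 : ContinuousAt Y x := ((hc1.log (by linarith)).neg)
    exact continuousAt_const.mul ((hc1.inv₀ (by linarith)).mul (hc2.rpow_const (Or.inl (by linarith))))
  have hg_int : IntervalIntegrable g volume c b := hg_cont.intervalIntegrable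
  -- FTC for g
  have hG_deriv : ∀ s ∈ Set.uIcc c b, HasDerivAt G (g s) s := by
    rw [Set.uIcc_of_le hcb.le]
    intro x hx
    obtain ⟨h1, h2, h3⟩ := hfacts x hx
    have hd1 : HasDerivAt (fun s : ℝ => t - s) (-1) x := by
      simpa using (hasDerivAt_id x).const_sub t
    have hd2 : HasDerivAt (fun s : ℝ => Real.log (t - s)) ((t - x)⁻¹ * (-1)) x :=
      (Real.hasDerivAt_log (ne_of_gt h1)).comp x hd1
    have hd3 : HasDerivAt Y ((t - x)⁻¹) x := by simpa using hd2.fun_neg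
    have hd4 : HasDerivAt (fun s => Y s ^ (1-γ)) ((t - x)⁻¹ * (1-γ) * Y x ^ (1 - γ - 1)) x :=
      hd3.rpow_const (Or.inl (ne_of_gt h3))
    have hd5 := hd4.const_mul ((2:ℝ)^(-α) / (1-γ))
    have hexp : (1:ℝ) - γ - 1 = -γ := by ring
    rw [hexp] at hd5
    refine hd5.congr_deriv ?_
    rw [hg]
    have h1γ : (1:ℝ) - γ ≠ 0 := by linarith
    field_simp
  have hFTC : ∫ s in c..b, g s = G b - G c :=
    intervalIntegral.integral_eq_sub_of_hasDerivAt hG_deriv hg_int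
  -- pointwise comparison g ≤ f on [c, b]
  have hgf : ∀ s ∈ Set.Icc c b, g s ≤ f s := by
    intro s hs
    obtain ⟨h1, h2, h3⟩ := hfacts s hs
    have hst₀ : s ∈ Set.Ioo (0:ℝ) t₀ := by
      constructor
      · rcases hs with ⟨h', _⟩; linarith
      · rcases hs with ⟨_, h'⟩; simp only [hb] at h'; linarith
    obtain ⟨k1, k2, k3⟩ := HL_facts ht₀e hst₀
    have hhs : h ≤ t - s := by rcases hs with ⟨_, h'⟩; simp only [hb] at h'; linarith
    have hts2 : t₀ - s ≤ 2 * (t - s) := by simp only [hh] at hhs ⊢; linarith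
    -- A1 : 2^(-α) * (t-s)^(-α) ≤ (t₀-s)^(-α)
    have A1 : (2:ℝ)^(-α) * (t - s)^(-α) ≤ (t₀ - s)^(-α) := by
      have e1 : (t₀ - s) ^ α ≤ (2 * (t - s)) ^ α :=
        Real.rpow_le_rpow k1.le hts2 hα0.le
      have e2 : ((2:ℝ) * (t - s)) ^ α = 2 ^ α * (t - s) ^ α :=
        Real.mul_rpow (by norm_num) h1.le
      rw [Real.rpow_neg k1.le, Real.rpow_neg h1.le, Real.rpow_neg (by norm_num : (0:ℝ) ≤ 2)]
      rw [← mul_inv]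
      apply inv_anti₀ (by positivity)
      calc (t₀ - s) ^ α ≤ (2 * (t - s)) ^ α := e1
        _ = 2 ^ α * (t - s) ^ α := e2
    -- A2 : Y^(-γ) ≤ X^(-γ)
    have hXY : -Real.log (t₀ - s) ≤ Y s := by
      simp only [hY]
      have := (Real.log_le_log_iff h1 k1).mpr (by linarith : t - s ≤ t₀ - s)
      linarith
    have hX0 : 0 < -Real.log (t₀ - s) := by linarith
    have A2 : Y s ^ (-γ) ≤ (-Real.log (t₀ - s)) ^ (-γ) := by
      rw [Real.rpow_neg h3.le, Real.rpow_neg hX0.le]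
      apply inv_anti₀ (Real.rpow_pos_of_pos hX0 _)
      exact Real.rpow_le_rpow hX0.le hXY hγ0.le
    -- the rpow identity
    have hid : (t - s)^(α-1) * (t - s)^(-α) = (t - s)⁻¹ := by
      rw [← Real.rpow_add h1, show α - 1 + -α = -1 by ring, Real.rpow_neg_one]
    have key : (2:ℝ)^(-α) * (t - s)^(-α) * Y s ^ (-γ)
        ≤ (t₀ - s)^(-α) * (-Real.log (t₀ - s)) ^ (-γ) :=
      mul_le_mul A1 A2 (Real.rpow_nonneg h3.le _)
        (Real.rpow_nonneg k1.le _)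
    calc g s = (t - s)^(α-1) * ((2:ℝ)^(-α) * (t - s)^(-α) * Y s ^ (-γ)) := by
          simp only [hg]; rw [← hid]; ring
      _ ≤ (t - s)^(α-1) * ((t₀ - s)^(-α) * (-Real.log (t₀ - s)) ^ (-γ)) :=
          mul_le_mul_of_nonneg_left key (Real.rpow_nonneg (by linarith) _)
      _ = f s := by
          simp only [hf, HLsigma, Set.indicator_of_mem hst₀]
  have hcomp : ∫ s in c..b, g s ≤ ∫ s in c..b, f s :=
    intervalIntegral.integral_mono_on hcb.le hg_int hi3 hgf
  -- final computation of G b - G c and monotone bound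
  have htb : t - b = t₀ - t := by simp only [hb, hh]; ring
  have hYb : Y b = -Real.log (t₀ - t) := by simp only [hY]; rw [htb]
  have htc : t₀/4 ≤ t - c := by simp only [hc]; linarith
  have htc1 : t - c < 1 := by simp only [hc]; linarith
  have hlog_c : 0 ≤ Y c ∧ Y c ≤ -Real.log (t₀/4) := by
    constructor
    · simp only [hY]; nlinarith [Real.log_nonpos (by linarith : (0:ℝ) ≤ t - c) htc1.le]
    · simp only [hY]
      have := (Real.log_le_log_iff (by positivity) (by linarith : (0:ℝ) < t - c)).mpr htc
      linarith
  have hGc : Y c ^ (1-γ) ≤ (-Real.log (t₀/4)) ^ (1-γ) :=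
    Real.rpow_le_rpow hlog_c.1 hlog_c.2 (by linarith)
  have hfinal : (2:ℝ)^(-α) / (1-γ) * ((-Real.log (t₀ - t))^(1-γ) - (-Real.log (t₀/4))^(1-γ))
      ≤ G b - G c := by
    have hK : (0:ℝ) ≤ (2:ℝ)^(-α) / (1-γ) := by
      apply div_nonneg (Real.rpow_nonneg (by norm_num) _) (by linarith)
    have hGbc : G b - G c = (2:ℝ)^(-α) / (1-γ) * ((-Real.log (t₀ - t))^(1-γ) - Y c ^ (1-γ)) := by
      simp only [hG]; rw [hYb]; ring
    rw [hGbc]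
    apply mul_le_mul_of_nonneg_left _ hK
    linarith
  calc (2:ℝ)^(-α) / (1-γ) * ((-Real.log (t₀ - t))^(1-γ) - (-Real.log (t₀/4))^(1-γ))
      ≤ G b - G c := hfinal
    _ = ∫ s in c..b, g s := hFTC.symm
    _ ≤ ∫ s in c..b, f s := hcomp
    _ ≤ (∫ s in c..b, f s) + ∫ s in b..t, f s := by linarith
    _ = ∫ s in c..t, f s := hsplit2.symm
    _ ≤ (∫ s in (0:ℝ)..c, f s) + ∫ s in c..t, f s := by linarith
    _ = ∫ s in (0:ℝ)..t, f s := hsplit1.symm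

/-- Hardy–Littlewood example: for every `p ∈ (1,∞)` and `T > 0` there exists `σ ∈ L^p(0,T)`
whose Riemann–Liouville integral `J^{1/p} σ` is essentially unbounded on `[0,T]`. -/
theorem exists_memLp_rlInt_essentially_unbounded (p T : ℝ) (hp : 1 < p) (hT : 0 < T) :
    ∃ σ : ℝ → ℝ, MemLp σ (ENNReal.ofReal p) (volume.restrict (Icc (0:ℝ) T)) ∧
      ∀ M > (0:ℝ), 0 < volume {t ∈ Icc (0:ℝ) T | M < |rlInt (1 / p) σ t|} := by
  have hp0 : 0 < p := by linarith
  set α : ℝ := 1 / p with hα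
  have hα0 : 0 < α := by positivity
  have hα1 : α < 1 := by rw [hα]; rw [div_lt_one hp0]; linarith
  set γ : ℝ := (α + 1) / 2 with hγ
  have hγ0 : 0 < γ := by rw [hγ]; linarith
  have hγ1 : γ < 1 := by rw [hγ]; linarith
  have hαγ : α < γ := by rw [hγ]; linarith
  have hαp : α * p = 1 := by rw [hα]; field_simp
  have hq1 : 1 < γ * p := by
    have : γ * p = (α * p + p) / 2 := by rw [hγ]; ring
    rw [this, hαp]; linarith
  set t₀ : ℝ := min T (Real.exp (-1)) with ht₀def
  have ht₀ : 0 < t₀ := lt_min hT (Real.exp_pos _)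
  have ht₀T : t₀ ≤ T := min_le_left _ _
  have ht₀e : t₀ ≤ Real.exp (-1) := min_le_right _ _
  refine ⟨HLsigma α γ t₀, HLsigma_memLp hp0 hαp hq1 ht₀ ht₀e, ?_⟩
  intro M hM
  have hΓ : 0 < Real.Gamma α := Real.Gamma_pos_of_pos hα0
  set K : ℝ := (2:ℝ)^(-α) / (1-γ) with hK
  have hKpos : 0 < K := by
    apply div_pos (Real.rpow_pos_of_pos (by norm_num) _) (by linarith)
  set A : ℝ := (Real.Gamma α)⁻¹ * K with hA
  have hApos : 0 < A := by positivity
  set C₀ : ℝ := (-Real.log (t₀/4))^(1-γ) with hC₀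
  have hC₀0 : 0 ≤ C₀ := by
    apply Real.rpow_nonneg
    have : t₀ / 4 < 1 := by
      have : Real.exp (-1) < 1 := by rw [Real.exp_lt_one_iff]; norm_num
      linarith
    have h4 : t₀/4 ≤ 1 := by
      have : Real.exp (-1) < 1 := by rw [Real.exp_lt_one_iff]; norm_num
      linarith
    linarith [Real.log_nonpos (by positivity : (0:ℝ) ≤ t₀/4) h4]
  set B : ℝ := (M / A + C₀ + 1) ^ (1 / (1 - γ)) with hB
  have hBbase : 0 < M / A + C₀ + 1 := by positivity
  have hB0 : 0 ≤ B := Real.rpow_nonneg hBbase.le _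
  set t₁ : ℝ := max (3 * t₀ / 4) (t₀ - Real.exp (-B)) with ht₁
  have ht₁lt : t₁ < t₀ := by
    apply max_lt (by linarith)
    have := Real.exp_pos (-B); linarith
  -- the subset inclusion
  have hsubset : Set.Ioo t₁ t₀ ⊆ {t ∈ Set.Icc (0:ℝ) T | M < |rlInt (1/p) (HLsigma α γ t₀) t|} := by
    intro t ht
    obtain ⟨htl, htr⟩ := ht
    have ht34 : 3 * t₀ / 4 < t := lt_of_le_of_lt (le_max_left _ _) htl
    have hth : t₀ - t < Real.exp (-B) := by
      have := lt_of_le_of_lt (le_max_right _ _) htl; linarith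
    constructor
    · exact ⟨by linarith, by linarith⟩
    · -- the lower bound
      have hlow := HL_lower hα0 hα1 hγ0 hγ1 ht₀ ht₀e ⟨ht34, htr⟩
      have hrl : rlInt (1/p) (HLsigma α γ t₀) t
          = (Real.Gamma α)⁻¹ * ∫ s in (0:ℝ)..t, (t - s)^(α-1) * HLsigma α γ t₀ s := by
        rw [rlInt, hα]
        simp [smul_eq_mul]
      -- chain of inequalities
      have hlog : B < -Real.log (t₀ - t) := by
        have h1 : 0 < t₀ - t := by linarith
        have := Real.log_lt_log h1 hth
        rw [Real.log_exp] at this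
        linarith
      have hrpow : M / A + C₀ + 1 < (-Real.log (t₀ - t))^(1-γ) := by
        have e1 : B ^ (1-γ) = M / A + C₀ + 1 := by
          rw [hB, ← Real.rpow_mul hBbase.le, one_div,
            inv_mul_cancel₀ (by linarith : (1:ℝ) - γ ≠ 0), Real.rpow_one]
        calc M / A + C₀ + 1 = B ^ (1-γ) := e1.symm
          _ < (-Real.log (t₀ - t))^(1-γ) :=
            Real.rpow_lt_rpow hB0 hlog (by linarith)
      have hstep : A * (M / A + 1) ≤ rlInt (1/p) (HLsigma α γ t₀) t := by
        rw [hrl]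
        have h2 : K * ((-Real.log (t₀ - t))^(1-γ) - C₀)
            ≤ ∫ s in (0:ℝ)..t, (t - s)^(α-1) * HLsigma α γ t₀ s := hlow
        have h3 := mul_le_mul_of_nonneg_left h2 (by positivity : (0:ℝ) ≤ (Real.Gamma α)⁻¹)
        calc A * (M / A + 1) ≤ (Real.Gamma α)⁻¹ * (K * ((-Real.log (t₀ - t))^(1-γ) - C₀)) := by
              rw [hA]
              rw [mul_assoc]
              apply mul_le_mul_of_nonneg_left _ (by positivity : (0:ℝ) ≤ (Real.Gamma α)⁻¹)
              apply mul_le_mul_of_nonneg_left _ hKpos.le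
              linarith
          _ ≤ _ := h3
      have hAM : M < A * (M / A + 1) := by
        rw [mul_add, mul_one, mul_div_cancel₀ _ (ne_of_gt hApos)]
        linarith
      have : M < rlInt (1/p) (HLsigma α γ t₀) t := lt_of_lt_of_le hAM hstep
      exact lt_of_lt_of_le this (le_abs_self _)
  calc (0:ENNReal) < volume (Set.Ioo t₁ t₀) := by
        rw [Real.volume_Ioo]
        exact ENNReal.ofReal_pos.mpr (by linarith)
    _ ≤ _ := measure_mono hsubset
end
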